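/- Let a_1, ..., a_n be unit vectors in R^3 and p_1, ..., p_n ≥ 0 with Σ_i p_i = 2 and Σ_i p_i a_i = 0, and let f(x) = Σ_i p_i Θ(x · a_i) with Θ(t) = max(t,0). Then the sum of f over the eight cube vertices v_{s_x s_y s_z} = (s_x, s_y, s_z)^T, s_k ∈ {±1}, is at most 8. -/

import Mathlib

open RealInnerProductSpace

/-- The vertex `(s_x, s_y, s_z)` of the cube `[-1,1]^3`, signs encoded by booleans. -/
noncomputable def cubeVtx (s : Fin 3 → Bool) : EuclideanSpace ℝ (Fin 3) :=
  WithLp.toLp 2 (fun k => if s k then 1 else -1)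

def cubeEquiv : Bool × Bool × Bool ≃ (Fin 3 → Bool) where
  toFun b := ![b.1, b.2.1, b.2.2]
  invFun s := (s 0, s 1, s 2)
  left_inv b := rfl
  right_inv s := by funext i; fin_cases i <;> rfl

lemma cubeEquiv_apply' (b : Bool × Bool × Bool) : cubeEquiv b = ![b.1, b.2.1, b.2.2] := rfl

lemma inner_cubeVtx (s : Fin 3 → Bool) (a : EuclideanSpace ℝ (Fin 3)) :
    ⟪cubeVtx s, a⟫ = ∑ k : Fin 3, (if s k then (1:ℝ) else -1) * a k := by
  simp [PiLp.inner_apply, RCLike.inner_apply, cubeVtx]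

lemma key (a : EuclideanSpace ℝ (Fin 3)) (ha : ‖a‖ = 1) :
    ∑ s : Fin 3 → Bool, max ⟪cubeVtx s, a⟫ 0 ≤ 4 := by
  have hnorm : a 0 ^ 2 + a 1 ^ 2 + a 2 ^ 2 = 1 := by
    have h := real_inner_self_eq_norm_sq a
    rw [ha] at h
    have h2 : a 0 * a 0 + a 1 * a 1 + a 2 * a 2 = 1 := by
      rw [PiLp.inner_apply, Fin.sum_univ_three] at h
      simp only [RCLike.inner_apply, conj_trivial] at h
      linarith
    nlinarith [h2]
  set g : (Fin 3 → Bool) → ℝ := fun s => ⟪cubeVtx s, a⟫ with hg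
  have hsq : ∑ s, g s ^ 2 = 8 := by
    rw [← Equiv.sum_comp cubeEquiv]
    simp only [hg, inner_cubeVtx, Fintype.sum_prod_type, Fintype.sum_bool, Fin.sum_univ_three,
      cubeEquiv_apply', Equiv.coe_fn_mk, Matrix.cons_val_zero, Matrix.cons_val_one, Matrix.head_cons,
      Matrix.cons_val_two, Matrix.tail_cons]
    norm_num
    nlinarith [hnorm]
  have hzero : ∑ s, g s = 0 := by
    rw [← Equiv.sum_comp cubeEquiv]
    simp only [hg, inner_cubeVtx, Fintype.sum_prod_type, Fintype.sum_bool, Fin.sum_univ_three,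
      cubeEquiv_apply', Equiv.coe_fn_mk, Matrix.cons_val_zero, Matrix.cons_val_one, Matrix.head_cons,
      Matrix.cons_val_two, Matrix.tail_cons]
    norm_num
    ring
  have habs2 : (∑ s, |g s|) ^ 2 ≤ 64 := by
    have := sq_sum_le_card_mul_sum_sq (s := (Finset.univ : Finset (Fin 3 → Bool)))
      (f := fun s => |g s|)
    simp only [sq_abs] at this
    calc (∑ s, |g s|) ^ 2 ≤ (Finset.univ : Finset (Fin 3 → Bool)).card * ∑ s, g s ^ 2 := this
      _ = 64 := by rw [hsq]; simp; norm_num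
  have habs : ∑ s, |g s| ≤ 8 := by
    nlinarith [Finset.sum_nonneg (fun s (_ : s ∈ Finset.univ) => abs_nonneg (g s))]
  have hmax : ∀ s, max (g s) 0 = (g s + |g s|) / 2 := by
    intro s; rcases abs_cases (g s) with ⟨h1, h2⟩ | ⟨h1, h2⟩ <;> rw [h1] <;>
      [rw [max_eq_left h2]; rw [max_eq_right (le_of_lt h2)]] <;> ring
  calc ∑ s : Fin 3 → Bool, max ⟪cubeVtx s, a⟫ 0 = ∑ s, (g s + |g s|) / 2 := by
        exact Finset.sum_congr rfl fun s _ => hmax s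
    _ = ((∑ s, g s) + ∑ s, |g s|) / 2 := by rw [← Finset.sum_add_distrib, Finset.sum_div]
    _ ≤ 4 := by rw [hzero]; linarith

theorem sum_f_cubeVtx_le_eight
    (n : ℕ) (a : Fin n → EuclideanSpace ℝ (Fin 3)) (p : Fin n → ℝ)
    (ha : ∀ i, ‖a i‖ = 1) (hp : ∀ i, 0 ≤ p i)
    (hp2 : ∑ i, p i = 2) (hsum : ∑ i, p i • a i = 0) :
    ∑ s : Fin 3 → Bool, (∑ i, p i * max ⟪cubeVtx s, a i⟫ 0) ≤ 8 := by
  rw [Finset.sum_comm]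
  have hb : ∀ i, ∑ s : Fin 3 → Bool, p i * max ⟪cubeVtx s, a i⟫ 0 ≤ p i * 4 := by
    intro i
    rw [← Finset.mul_sum]
    exact mul_le_mul_of_nonneg_left (key (a i) (ha i)) (hp i)
  calc ∑ i, ∑ s : Fin 3 → Bool, p i * max ⟪cubeVtx s, a i⟫ 0
      ≤ ∑ i, p i * 4 := Finset.sum_le_sum fun i _ => hb i
    _ = 8 := by rw [← Finset.sum_mul, hp2]; norm_num
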